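/- Let R be a commutative Artinian ring that admits an injective ring homomorphism into a commutative local ring. Then R is local. -/

import Mathlib

lemma local_idem {S : Type*} [CommRing S] [IsLocalRing S] {a : S}
    (ha : IsIdempotentElem a) : a = 0 ∨ a = 1 := by
  rcases IsLocalRing.isUnit_or_isUnit_one_sub_self a with h | h
  · right
    exact h.mul_left_cancel (by simpa [IsIdempotentElem] using ha)
  · left
    refine h.mul_left_cancel ?_
    show (1 - a) * a = (1 - a) * 0
    rw [mul_zero, sub_mul, one_mul, ha.eq, sub_self]

/-- A commutative Artinian ring that admits an injective ring homomorphism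
into a commutative local ring is local. -/
theorem stmt_0 (R S : Type*) [CommRing R] [IsArtinianRing R] [CommRing S] [IsLocalRing S]
    (f : R →+* S) (hf : Function.Injective f) : IsLocalRing R := by
  classical
  have hR : Nontrivial R := f.domain_nontrivial
  by_contra hloc
  obtain ⟨m1, hm1⟩ := Ideal.exists_maximal R
  obtain ⟨m2, hm2, hne⟩ : ∃ m2 : Ideal R, m2.IsMaximal ∧ m2 ≠ m1 := by
    by_contra h
    push_neg at h
    exact hloc (IsLocalRing.of_unique_max_ideal ⟨m1, hm1, fun m hm => h m hm⟩)
  set e' : ∀ I : MaximalSpectrum R, R ⧸ I.asIdeal :=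
    fun I => if I.asIdeal = m1 then 1 else 0 with he'
  have he'i : IsIdempotentElem e' := by
    show e' * e' = e'
    funext I
    by_cases h : I.asIdeal = m1 <;> simp [e', h]
  set ebar : R ⧸ nilradical R := (IsArtinianRing.quotNilradicalEquivPi R).symm e' with hebar
  have hebari : IsIdempotentElem ebar := by
    show ebar * ebar = ebar
    rw [hebar, ← map_mul, he'i]
  obtain ⟨e, hei, hemk⟩ : ∃ e : R, IsIdempotentElem e ∧
      Ideal.Quotient.mk (nilradical R) e = ebar :=
    exists_isIdempotentElem_eq_of_ker_isNilpotent
      (Ideal.Quotient.mk (nilradical R))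
      (fun x hx => by
        rw [RingHom.mem_ker, Ideal.Quotient.eq_zero_iff_mem] at hx
        exact hx)
      ebar (RingHom.mem_range.mpr (Ideal.Quotient.mk_surjective ebar)) hebari
  have he0 : e ≠ 0 := by
    intro h
    have hb0 : ebar = 0 := by rw [← hemk, h, map_zero]
    have h2 : e' = 0 := by
      have := congrArg (IsArtinianRing.quotNilradicalEquivPi R) hb0
      simpa [hebar] using this
    have : e' ⟨m1, hm1⟩ = 0 := by rw [h2]; rfl
    simp [e'] at this
  have he1 : e ≠ 1 := by
    intro h
    have hb1 : ebar = 1 := by rw [← hemk, h, map_one]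
    have h2 : e' = 1 := by
      have := congrArg (IsArtinianRing.quotNilradicalEquivPi R) hb1
      simpa [hebar] using this
    have : e' ⟨m2, hm2⟩ = 1 := by rw [h2]; rfl
    simp [e', hne] at this
  have hfi : IsIdempotentElem (f e) := by
    show f e * f e = f e
    rw [← map_mul, hei]
  rcases local_idem hfi with h | h
  · exact he0 (hf (by rw [h, map_zero]))
  · exact he1 (hf (by rw [h, map_one]))
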